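/- Let H be a finite-dimensional complex inner product space, and let χ and η be unit vectors in H whose inner product has modulus strictly between 0 and 1. Let θ ∈ (0, π) be defined by |⟨χ, η⟩| = cos(θ/2). Define the reflections U = Id − 2·P_χ and S = Id − 2·P_η, where P_χ and P_η are the orthogonal projections onto the lines spanned by χ and η respectively, and let Q = U·S. Then the two-dimensional subspace spanned by χ and η is invariant under Q, and there exist nonzero vectors ψ₊ and ψ₋ in span{χ, η} with Q·ψ₊ = e^{iθ}·ψ₊ and Q·ψ₋ = e^{−iθ}·ψ₋. -/

import Mathlib

/-- The Grover iterate `Q = U S`, with `U` and `S` the reflections associated with the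
unit vectors `χ` and `η` satisfying `|⟨χ, η⟩| = cos(θ/2)` for `θ ∈ (0, π)`, leaves the
span of `χ` and `η` invariant and has nonzero eigenvectors in this span with eigenvalues
`e^{±iθ}`. -/
theorem grover_iterate_eigenvalues {H : Type*} [NormedAddCommGroup H]
    [InnerProductSpace ℂ H] [FiniteDimensional ℂ H]
    (χ η : H) (hχ : ‖χ‖ = 1) (hη : ‖η‖ = 1)
    (hlow : 0 < ‖(inner ℂ χ η : ℂ)‖)
    (hhigh : ‖(inner ℂ χ η : ℂ)‖ < 1)
    (θ : ℝ) (hθ0 : 0 < θ) (hθπ : θ < Real.pi)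
    (hθ : ‖(inner ℂ χ η : ℂ)‖ = Real.cos (θ / 2))
    (U S : H →ₗ[ℂ] H)
    (hU : ∀ x, U x = x - (2 : ℂ) • ((inner ℂ χ x : ℂ) • χ))
    (hS : ∀ x, S x = x - (2 : ℂ) • ((inner ℂ η x : ℂ) • η)) :
    (∀ x ∈ Submodule.span ℂ ({χ, η} : Set H),
        U (S x) ∈ Submodule.span ℂ ({χ, η} : Set H))
    ∧ ∃ ψp ψm : H,
        ψp ∈ Submodule.span ℂ ({χ, η} : Set H)
        ∧ ψm ∈ Submodule.span ℂ ({χ, η} : Set H)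
        ∧ ψp ≠ 0 ∧ ψm ≠ 0
        ∧ U (S ψp) = Complex.exp (θ * Complex.I) • ψp
        ∧ U (S ψm) = Complex.exp (-θ * Complex.I) • ψm := by
  have hχmem : χ ∈ Submodule.span ℂ ({χ, η} : Set H) :=
    Submodule.subset_span (by simp)
  have hηmem : η ∈ Submodule.span ℂ ({χ, η} : Set H) :=
    Submodule.subset_span (by simp)
  set a : ℂ := (inner ℂ χ η : ℂ) with ha
  set c : ℝ := Real.cos (θ / 2) with hcdef
  have hχχ : (inner ℂ χ χ : ℂ) = 1 := by
    rw [inner_self_eq_norm_sq_to_K, hχ]; norm_num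
  have hηη : (inner ℂ η η : ℂ) = 1 := by
    rw [inner_self_eq_norm_sq_to_K, hη]; norm_num
  have hηχ : (inner ℂ η χ : ℂ) = starRingEnd ℂ a := (inner_conj_symm η χ).symm
  have hane : a ≠ 0 := by
    intro h
    rw [h] at hlow; simp at hlow
  have hc2 : a * starRingEnd ℂ a = (c : ℂ) ^ 2 := by
    rw [Complex.mul_conj, Complex.normSq_eq_norm_sq, hθ]
    push_cast
    ring
  have hclt : c < 1 := hθ ▸ hhigh
  have hcpos : 0 < c := hθ ▸ hlow
  -- the key eigenvalue identity
  have hkey : ∀ s : ℝ, s = 1 ∨ s = -1 →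
      (Complex.exp (s * θ * Complex.I) + 1) ^ 2
        = 4 * (c : ℂ) ^ 2 * Complex.exp (s * θ * Complex.I) := by
    intro s hs
    set w : ℂ := Complex.exp ((s * θ / 2 : ℝ) * Complex.I) with hw
    have hwsq : Complex.exp (s * θ * Complex.I) = w ^ 2 := by
      rw [hw, ← Complex.exp_nat_mul]
      push_cast
      ring_nf
    have hwinv : w * Complex.exp ((-(s * θ / 2) : ℝ) * Complex.I) = 1 := by
      rw [hw, ← Complex.exp_add, ← Complex.exp_zero]
      congr 1
      push_cast
      ring
    have hcos : Complex.cos (((s * θ / 2 : ℝ)) : ℂ) = (c : ℂ) := by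
      rw [← Complex.ofReal_cos, Complex.ofReal_inj]
      rcases hs with h | h <;> subst h
      · rw [one_mul]
      · rw [show (-1 : ℝ) * θ / 2 = -(θ / 2) by ring, Real.cos_neg]
    have hsum : w + Complex.exp ((-(s * θ / 2) : ℝ) * Complex.I) = 2 * (c : ℂ) := by
      rw [hw, Complex.exp_mul_I, Complex.exp_mul_I]
      rw [show ((-(s * θ / 2) : ℝ) : ℂ) = -((s * θ / 2 : ℝ) : ℂ) by push_cast; ring]
      rw [Complex.cos_neg, Complex.sin_neg, hcos]
      ring
    calc (Complex.exp (s * θ * Complex.I) + 1) ^ 2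
        = (w * (w + Complex.exp ((-(s * θ / 2) : ℝ) * Complex.I))) ^ 2 := by
          rw [hwsq, mul_add, hwinv]; ring
      _ = w ^ 2 * (2 * (c : ℂ)) ^ 2 := by rw [hsum]; ring
      _ = 4 * (c : ℂ) ^ 2 * Complex.exp (s * θ * Complex.I) := by rw [hwsq]; ring
  -- main construction for any eigenvalue l with (l+1)^2 = 4c²l
  have main : ∀ l : ℂ, (l + 1) ^ 2 = 4 * (c : ℂ) ^ 2 * l →
      ∃ ψ : H, ψ ∈ Submodule.span ℂ ({χ, η} : Set H) ∧ ψ ≠ 0 ∧ U (S ψ) = l • ψ := by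
    intro l hl
    set β : ℂ := l + 1 - 4 * (c : ℂ) ^ 2 with hβ
    refine ⟨(2 * a) • χ + β • η, ?_, ?_, ?_⟩
    · exact Submodule.add_mem _ (Submodule.smul_mem _ _ hχmem) (Submodule.smul_mem _ _ hηmem)
    · intro h
      have h1 : (inner ℂ χ ((2 * a) • χ + β • η) : ℂ) = 0 := by rw [h, inner_zero_right]
      have h2 : (inner ℂ η ((2 * a) • χ + β • η) : ℂ) = 0 := by rw [h, inner_zero_right]
      rw [inner_add_right, inner_smul_right, inner_smul_right, hχχ, ← ha] at h1
      rw [inner_add_right, inner_smul_right, inner_smul_right, hηχ, hηη] at h2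
      have hβ2 : β = -2 := by
        have : a * (2 + β) = 0 := by linear_combination h1
        rcases mul_eq_zero.mp this with h' | h'
        · exact absurd h' hane
        · linear_combination h'
      have : (c : ℂ) ^ 2 = 1 := by
        rw [hβ2] at h2
        linear_combination (-1 : ℂ) * hc2 + h2 / 2
      have hr : c ^ 2 = 1 := by
        exact_mod_cast this
      nlinarith
    · rw [hS, hU]
      rw [inner_add_right, inner_smul_right, inner_smul_right, hηχ, hηη]
      rw [inner_sub_right, inner_smul_right, inner_add_right, inner_smul_right,
        inner_smul_right, hχχ, ← ha, inner_smul_right, ← ha]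
      match_scalars
      · linear_combination (2 * a) * hβ + (8 * a) * hc2
      · linear_combination (-(1 + l)) * hβ - 4 * hc2 - hl
  obtain ⟨ψp, hp1, hp2, hp3⟩ := main (Complex.exp (θ * Complex.I)) (by
    have := hkey 1 (Or.inl rfl); simpa using this)
  obtain ⟨ψm, hm1, hm2, hm3⟩ := main (Complex.exp (-θ * Complex.I)) (by
    have := hkey (-1) (Or.inr rfl); simpa using this)
  refine ⟨?_, ψp, ψm, hp1, hm1, hp2, hm2, hp3, hm3⟩
  intro x hx
  rw [hS, hU]
  exact Submodule.sub_mem _ (Submodule.sub_mem _ hx (Submodule.smul_mem _ _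
    (Submodule.smul_mem _ _ hηmem))) (Submodule.smul_mem _ _ (Submodule.smul_mem _ _ hχmem))
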